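/- Let p > 5 be a prime, and let pA and pB denote the two conjugacy classes of elements of order p in SL_2(F_p), where pA is the class of the matrix [[1,1],[0,1]] and pB is the class of [[1,ε],[0,1]] for ε ∈ F_p^× a non-square. Let ξ ∈ F_p^× be a generator and for 0 < i < (p−1)/2 let C(i) = {A ∈ SL_2(F_p) : tr(A) = ξ^i + ξ^{−i}}. For conjugacy classes C1, C2, C3 let Ni(C1,C2,C3) denote the set of triples (g1,g2,g3) with g_j ∈ C_j, g1·g2·g3 = 1 and g1, g2, g3 generating SL_2(F_p), taken modulo simultaneous conjugation by SL_2(F_p). Then for every 0 < i < (p−1)/2, exactly one of the following holds: (i) Ni(pA,pA,C(i)) is empty and Ni(pA,pB,C(i)) has exactly one element, or (ii) Ni(pA,pA,C(i)) has exactly one element and Ni(pA,pB,C(i)) is empty. -/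

import Mathlib

open Matrix

/-- Triples `(g1, g2, g3)` with `g_j ∈ C_j`, `g1 g2 g3 = 1`, generating the whole group. -/
def NielsenTriple {G : Type*} [Group G] (C1 C2 C3 : Set G) : Type _ :=
  {t : G × G × G // t.1 ∈ C1 ∧ t.2.1 ∈ C2 ∧ t.2.2 ∈ C3 ∧ t.1 * t.2.1 * t.2.2 = 1 ∧
    Subgroup.closure {t.1, t.2.1, t.2.2} = ⊤}

/-- The Nielsen class: such triples modulo simultaneous conjugation. -/
def Ni {G : Type*} [Group G] (C1 C2 C3 : Set G) : Type _ :=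
  Quot (fun t t' : NielsenTriple C1 C2 C3 =>
    ∃ h : G, (t'.val : G × G × G) =
      (h * t.val.1 * h⁻¹, h * t.val.2.1 * h⁻¹, h * t.val.2.2 * h⁻¹))

/-- The subset `C(i)` of `SL₂(𝔽_p)` of matrices of trace `ξ^i + ξ^{-i}`. -/
def TraceClass (p : ℕ) (ξ : (ZMod p)ˣ) (i : ℕ) :
    Set (Matrix.SpecialLinearGroup (Fin 2) (ZMod p)) :=
  {A | Matrix.trace (A : Matrix (Fin 2) (Fin 2) (ZMod p)) =
    ((ξ ^ i : (ZMod p)ˣ) : ZMod p) + (((ξ ^ i)⁻¹ : (ZMod p)ˣ) : ZMod p)}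

namespace S13
variable {F : Type*} [Field F]

abbrev SL2 (F : Type*) [CommRing F] := Matrix.SpecialLinearGroup (Fin 2) F

def Uu (x : F) : SL2 F := ⟨!![1,x;0,1], by simp [Matrix.det_fin_two_of]⟩
def Ll (y : F) : SL2 F := ⟨!![1,0;y,1], by simp [Matrix.det_fin_two_of]⟩

@[simp] lemma Uu_coe (x : F) : ((Uu x : SL2 F) : Matrix (Fin 2) (Fin 2) F) = !![1,x;0,1] := rfl
@[simp] lemma Ll_coe (y : F) : ((Ll y : SL2 F) : Matrix (Fin 2) (Fin 2) F) = !![1,0;y,1] := rfl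

lemma Uu_mul (x y : F) : (Uu x) * (Uu y) = Uu (x + y) := by
  apply Subtype.ext; simp [Matrix.mul_fin_two, add_comm]

lemma Ll_mul (x y : F) : (Ll x) * (Ll y) = Ll (x + y) := by
  apply Subtype.ext; simp [Matrix.mul_fin_two, add_comm]

lemma Uu_inv (x : F) : (Uu x)⁻¹ = Uu (-x) := by
  rw [inv_eq_iff_mul_eq_one, Uu_mul]
  apply Subtype.ext; simp [Uu, Matrix.one_fin_two]

lemma Uu_pow (x : F) (n : ℕ) : (Uu x) ^ n = Uu (n * x) := by
  induction n with
  | zero => apply Subtype.ext; simp [Matrix.one_fin_two]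
  | succ n ih => rw [pow_succ, ih, Uu_mul]; congr 1; push_cast; ring

lemma Ll_pow (x : F) (n : ℕ) : (Ll x) ^ n = Ll (n * x) := by
  induction n with
  | zero => apply Subtype.ext; simp [Matrix.one_fin_two]
  | succ n ih => rw [pow_succ, ih, Ll_mul]; congr 1; push_cast; ring

lemma trace_Uu (x : F) : Matrix.trace ((Uu x : SL2 F) : Matrix (Fin 2) (Fin 2) F) = 2 := by
  rw [Uu_coe, Matrix.trace_fin_two]
  norm_num

lemma trace_inv (A : SL2 F) :
    Matrix.trace ((A⁻¹ : SL2 F) : Matrix (Fin 2) (Fin 2) F)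
      = Matrix.trace (A : Matrix (Fin 2) (Fin 2) F) := by
  rw [Matrix.SpecialLinearGroup.coe_inv]
  simp [Matrix.trace_fin_two, Matrix.adjugate_fin_two]
  ring

lemma trace_isConj {A B : SL2 F} (h : IsConj A B) :
    Matrix.trace (B : Matrix (Fin 2) (Fin 2) F) = Matrix.trace (A : Matrix (Fin 2) (Fin 2) F) := by
  obtain ⟨c, hc⟩ := isConj_iff.mp h
  have hB : B = c * (A * c⁻¹) := by rw [← hc]; group
  rw [hB, Matrix.SpecialLinearGroup.coe_mul, Matrix.trace_mul_comm,
    ← Matrix.SpecialLinearGroup.coe_mul]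
  congr 1
  group

lemma isConj_Uu_Ll (s γ : F) (hγ : γ ≠ 0) : IsConj (Uu s) (Ll (-s * γ^2)) := by
  rw [isConj_iff]
  refine ⟨⟨!![0, -γ⁻¹; γ, 0], by simp [Matrix.det_fin_two_of, hγ]⟩, ?_⟩
  refine mul_inv_eq_iff_eq_mul.mpr ?_
  apply Subtype.ext
  show (!![0, -γ⁻¹; γ, 0] * !![1, s; 0, 1] : Matrix (Fin 2) (Fin 2) F) = !![1, 0; -s * γ ^ 2, 1] * !![0, -γ⁻¹; γ, 0]
  ext i j
  fin_cases i <;> fin_cases j <;>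
    simp [Uu, Ll, Matrix.mul_apply, Fin.sum_univ_two] <;> field_simp <;> ring

lemma exists_of_isConj_Uu_Ll {s c : F} (hs : s ≠ 0) (h : IsConj (Uu s) (Ll c)) :
    ∃ γ : F, γ ≠ 0 ∧ c = -s * γ ^ 2 := by
  obtain ⟨k, hk⟩ := isConj_iff.mp h
  rw [mul_inv_eq_iff_eq_mul] at hk
  have hm := congrArg (fun A : SL2 F => (A : Matrix (Fin 2) (Fin 2) F)) hk
  push_cast at hm
  have hdet : (k : Matrix (Fin 2) (Fin 2) F) 0 0 * (k : Matrix (Fin 2) (Fin 2) F) 1 1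
      - (k : Matrix (Fin 2) (Fin 2) F) 0 1 * (k : Matrix (Fin 2) (Fin 2) F) 1 0 = 1 := by
    have := k.prop; rw [Matrix.det_fin_two] at this; exact this
  have e01 := congrFun (congrFun hm 0) 1
  have e11 := congrFun (congrFun hm 1) 1
  simp [Matrix.SpecialLinearGroup.coe_mul, Matrix.mul_apply, Fin.sum_univ_two] at e01 e11
  have h00 : (k : Matrix (Fin 2) (Fin 2) F) 0 0 = 0 := by
    rcases e01 with h' | h'
    · exact h'
    · exact absurd h' hs
  have hdet' : (k : Matrix (Fin 2) (Fin 2) F) 0 1 * (k : Matrix (Fin 2) (Fin 2) F) 1 0 = -1 := by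
    linear_combination (-1 : F) * hdet + (k : Matrix (Fin 2) (Fin 2) F) 1 1 * h00
  have h10 : (k : Matrix (Fin 2) (Fin 2) F) 1 0 ≠ 0 := by
    intro h'
    rw [h'] at hdet'; simp at hdet'
  exact ⟨(k : Matrix (Fin 2) (Fin 2) F) 1 0, h10,
    by linear_combination (k : Matrix (Fin 2) (Fin 2) F) 1 0 * e11 + c * hdet'⟩

/-- Reduction to canonical form. -/
lemma reduce (τ : F) (hτ : τ - 2 ≠ 0) (g1 g2 g3 : SL2 F)
    (h1 : ∃ k : SL2 F, k * Uu 1 * k⁻¹ = g1)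
    (h2tr : Matrix.trace (g2 : Matrix (Fin 2) (Fin 2) F) = 2)
    (h3tr : Matrix.trace (g3 : Matrix (Fin 2) (Fin 2) F) = τ)
    (hmul : g1 * g2 * g3 = 1) :
    ∃ k : SL2 F, g1 = k * Uu 1 * k⁻¹ ∧ g2 = k * Ll (τ - 2) * k⁻¹ ∧
      g3 = k * (Uu 1 * Ll (τ - 2))⁻¹ * k⁻¹ := by
  obtain ⟨k0, hk0⟩ := h1
  set m2 : SL2 F := k0⁻¹ * g2 * k0 with hm2
  set m3 : SL2 F := k0⁻¹ * g3 * k0 with hm3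
  have hU1 : Uu (1:F) = k0⁻¹ * g1 * k0 := by rw [← hk0]; group
  have hmul' : Uu 1 * m2 * m3 = 1 := by
    rw [hU1, hm2, hm3]
    have h2 : k0⁻¹ * (g1 * g2 * g3) * k0 = 1 := by rw [hmul]; group
    rw [← h2]; group
  have hm3' : m3 = (Uu 1 * m2)⁻¹ := (inv_eq_of_mul_eq_one_right hmul').symm
  set a := (m2 : Matrix (Fin 2) (Fin 2) F) 0 0 with ha
  set b := (m2 : Matrix (Fin 2) (Fin 2) F) 0 1 with hb
  set c := (m2 : Matrix (Fin 2) (Fin 2) F) 1 0 with hcdef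
  set d := (m2 : Matrix (Fin 2) (Fin 2) F) 1 1 with hd
  have hmat : (m2 : Matrix (Fin 2) (Fin 2) F) = !![a,b;c,d] := by
    ext i j; fin_cases i <;> fin_cases j <;> rfl
  have htr2 : a + d = 2 := by
    have : Matrix.trace (m2 : Matrix (Fin 2) (Fin 2) F) = 2 := by
      have hcj : IsConj g2 m2 := isConj_iff.mpr ⟨k0⁻¹, by rw [hm2]; group⟩
      rw [trace_isConj hcj, h2tr]
    rwa [Matrix.trace_fin_two] at this
  have hdet : a * d - b * c = 1 := by
    have := m2.prop; rw [Matrix.det_fin_two] at this; exact this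
  have htr3 : Matrix.trace ((Uu 1 * m2 : SL2 F) : Matrix (Fin 2) (Fin 2) F) = τ := by
    have hcj : IsConj g3 m3 := isConj_iff.mpr ⟨k0⁻¹, by rw [hm3]; group⟩
    rw [← trace_inv (Uu 1 * m2), ← hm3', trace_isConj hcj, h3tr]
  have hc : c = τ - 2 := by
    rw [Matrix.SpecialLinearGroup.coe_mul, hmat] at htr3
    simp [Uu, Matrix.mul_fin_two, Matrix.trace_fin_two] at htr3
    linear_combination htr3 - htr2
  have hc0 : c ≠ 0 := hc ▸ hτ
  set x := (1 - a) * c⁻¹ with hx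
  have hx' : x * c = 1 - a := by rw [hx]; field_simp
  have hax : a + x * c = 1 := by linear_combination hx'
  have e01 : b + x * (d - 1) = 0 := by
    have h0 : c * (b + x * (d - 1)) = 0 := by
      linear_combination (d-1) * hx' + htr2 - hdet
    rcases mul_eq_zero.mp h0 with h' | h'
    · exact absurd h' hc0
    · exact h'
  have key : Uu x * m2 * (Uu x)⁻¹ = Ll (τ - 2) := by
    rw [Uu_inv]
    apply Subtype.ext
    rw [Matrix.SpecialLinearGroup.coe_mul, Matrix.SpecialLinearGroup.coe_mul, hmat]
    show !![1,x;0,1] * !![a,b;c,d] * !![1,-x;0,1] = !![1,0;τ-2,1]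
    ext i j
    fin_cases i <;> fin_cases j <;>
      simp [Matrix.mul_apply, Fin.sum_univ_two] <;>
      first
        | linear_combination hax
        | linear_combination e01 - x * hax
        | linear_combination x * hax - e01
        | linear_combination hc
        | linear_combination htr2 - hax
  have hcomm' : (Uu x)⁻¹ * Uu 1 * Uu x = Uu 1 := by
    rw [Uu_inv, Uu_mul, Uu_mul]; congr 1; ring
  refine ⟨k0 * (Uu x)⁻¹, ?_, ?_, ?_⟩
  · rw [← hk0, _root_.mul_inv_rev, inv_inv]
    calc k0 * Uu 1 * k0⁻¹
        = k0 * ((Uu x)⁻¹ * Uu 1 * Uu x) * k0⁻¹ := by rw [hcomm']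
      _ = k0 * (Uu x)⁻¹ * Uu 1 * (Uu x * k0⁻¹) := by group
  · have hg2 : g2 = k0 * m2 * k0⁻¹ := by rw [hm2]; group
    rw [hg2, ← key]
    group
  · have hg3 : g3 = k0 * m3 * k0⁻¹ := by rw [hm3]; group
    have hm2' : m2 = (Uu x)⁻¹ * Ll (τ - 2) * Uu x := by rw [← key]; group
    have hc2 : Uu 1 * (Uu x)⁻¹ = (Uu x)⁻¹ * Uu 1 := by
      rw [Uu_inv, Uu_mul, Uu_mul]; congr 1; ring
    have hstep : Uu 1 * ((Uu x)⁻¹ * Ll (τ-2) * Uu x)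
        = (Uu x)⁻¹ * (Uu 1 * Ll (τ-2)) * Uu x := by
      calc Uu 1 * ((Uu x)⁻¹ * Ll (τ-2) * Uu x)
          = (Uu 1 * (Uu x)⁻¹) * Ll (τ-2) * Uu x := by group
        _ = ((Uu x)⁻¹ * Uu 1) * Ll (τ-2) * Uu x := by rw [hc2]
        _ = (Uu x)⁻¹ * (Uu 1 * Ll (τ-2)) * Uu x := by group
    rw [hg3, hm3', hm2', hstep]
    group

/-- generation of `SL₂(𝔽_p)` -/
lemma closure_eq_top (p : ℕ) [Fact p.Prime] (c : ZMod p) (hc : c ≠ 0) :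
    Subgroup.closure ({Uu 1, Ll c} : Set (SL2 (ZMod p))) = ⊤ := by
  rw [eq_top_iff]
  set H := Subgroup.closure ({Uu 1, Ll c} : Set (SL2 (ZMod p))) with hH
  have hUmem : ∀ x : ZMod p, Uu x ∈ H := by
    intro x
    obtain ⟨n, hn⟩ := ZMod.natCast_zmod_surjective (n := p) x
    have : Uu x = (Uu 1) ^ n := by rw [Uu_pow, mul_one, hn]
    rw [this]
    exact pow_mem (Subgroup.subset_closure (by simp)) n
  have hLmem : ∀ y : ZMod p, Ll y ∈ H := by
    intro y
    obtain ⟨n, hn⟩ := ZMod.natCast_zmod_surjective (n := p) (y * c⁻¹)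
    have : Ll y = (Ll c) ^ n := by
      rw [Ll_pow, hn]; congr 1; field_simp
    rw [this]
    exact pow_mem (Subgroup.subset_closure (by simp)) n
  have key : ∀ g : SL2 (ZMod p), (g : Matrix (Fin 2) (Fin 2) (ZMod p)) 1 0 ≠ 0 → g ∈ H := by
    intro g hg
    obtain ⟨a, b, c0, d, hmat, hdet, hc0⟩ :
        ∃ a b c0 d : ZMod p, (g : Matrix (Fin 2) (Fin 2) (ZMod p)) = !![a,b;c0,d]
          ∧ a * d - b * c0 = 1 ∧ c0 ≠ 0 := by
      refine ⟨(g : Matrix (Fin 2) (Fin 2) (ZMod p)) 0 0, (g : Matrix (Fin 2) (Fin 2) (ZMod p)) 0 1,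
        (g : Matrix (Fin 2) (Fin 2) (ZMod p)) 1 0, (g : Matrix (Fin 2) (Fin 2) (ZMod p)) 1 1,
        ?_, ?_, hg⟩
      · ext i j; fin_cases i <;> fin_cases j <;> rfl
      · have := g.prop; rw [Matrix.det_fin_two] at this; exact this
    have hdecomp : g = Uu ((a - 1) * c0⁻¹) * Ll c0 * Uu ((d - 1) * c0⁻¹) := by
      apply Subtype.ext
      rw [Matrix.SpecialLinearGroup.coe_mul, Matrix.SpecialLinearGroup.coe_mul, hmat,
        Uu_coe, Ll_coe, Uu_coe, Matrix.mul_fin_two, Matrix.mul_fin_two]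
      ext i j
      fin_cases i <;> fin_cases j <;>
        simp <;>
        field_simp <;>
        first
          | ring1
          | linear_combination -2 * hdet
          | linear_combination 2 * hdet
          | linear_combination hdet
          | linear_combination -hdet
    rw [hdecomp]
    exact mul_mem (mul_mem (hUmem _) (hLmem _)) (hUmem _)
  intro g _
  by_cases hg : (g : Matrix (Fin 2) (Fin 2) (ZMod p)) 1 0 ≠ 0
  · exact key g hg
  · push_neg at hg
    have h1 : ((Ll 1 * g : SL2 (ZMod p)) : Matrix (Fin 2) (Fin 2) (ZMod p)) 1 0 ≠ 0 := by
      rw [Matrix.SpecialLinearGroup.coe_mul]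
      simp [Ll, Matrix.mul_apply, Fin.sum_univ_two, hg]
      intro h0
      have := g.prop; rw [Matrix.det_fin_two] at this
      rw [h0, hg] at this; simp at this
    have hsplit : g = (Ll 1)⁻¹ * (Ll 1 * g) := by group
    rw [hsplit]
    exact mul_mem (inv_mem (hLmem 1)) (key _ h1)

lemma sq_cases (p : ℕ) [Fact p.Prime] (ε u : ZMod p) (hε : ε ≠ 0)
    (hεns : ¬ ∃ x : ZMod p, x ^ 2 = ε) (hu : u ≠ 0) :
    ((∃ γ : ZMod p, u = γ ^ 2) ∨ (∃ γ : ZMod p, u = ε * γ ^ 2)) ∧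
      ¬ ((∃ γ : ZMod p, u = γ ^ 2) ∧ (∃ γ : ZMod p, u = ε * γ ^ 2)) := by
  have hεns' : ¬ IsSquare ε := by
    intro ⟨r, hr⟩; exact hεns ⟨r, by rw [hr]; ring⟩
  constructor
  · by_cases hsq : IsSquare u
    · obtain ⟨r, hr⟩ := hsq
      exact Or.inl ⟨r, by rw [hr]; ring⟩
    · right
      have h1 : quadraticChar (ZMod p) u = -1 := quadraticChar_neg_one_iff_not_isSquare.mpr hsq
      have h2 : quadraticChar (ZMod p) ε = -1 := quadraticChar_neg_one_iff_not_isSquare.mpr hεns'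
      have h3 : quadraticChar (ZMod p) (u * ε⁻¹) = 1 := by
        have hinv : quadraticChar (ZMod p) ε⁻¹ = -1 := by
          have := map_mul (quadraticChar (ZMod p)) ε ε⁻¹
          rw [mul_inv_cancel₀ hε, _root_.map_one, h2] at this
          linarith [this]
        rw [_root_.map_mul, h1, hinv]; ring
      have h4 : IsSquare (u * ε⁻¹) :=
        (quadraticChar_one_iff_isSquare (by exact mul_ne_zero hu (inv_ne_zero hε))).mp h3
      obtain ⟨r, hr⟩ := h4
      refine ⟨r, ?_⟩
      have : u * ε⁻¹ = r ^ 2 := by rw [hr]; ring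
      field_simp at this
      rw [this]
  · rintro ⟨⟨γ, hγ⟩, ⟨δ, hδ⟩⟩
    have hδ0 : δ ≠ 0 := by rintro rfl; simp at hδ; exact hu hδ
    exact hεns ⟨γ * δ⁻¹, by field_simp; linear_combination hδ - hγ⟩

section MainAux

variable (p : ℕ) [Fact p.Prime] (ξ : (ZMod p)ˣ) (i : ℕ)

/-- The target trace value. -/
noncomputable def τv : ZMod p := ((ξ ^ i : (ZMod p)ˣ) : ZMod p) + (((ξ ^ i)⁻¹ : (ZMod p)ˣ) : ZMod p)

lemma reduce_triple (hτ : τv p ξ i - 2 ≠ 0) (s : ZMod p)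
    (T : NielsenTriple {A | IsConj (Uu 1) A} {A | IsConj (Uu s) A} (TraceClass p ξ i)) :
    ∃ k : SL2 (ZMod p), T.val.1 = k * Uu 1 * k⁻¹ ∧ T.val.2.1 = k * Ll (τv p ξ i - 2) * k⁻¹ ∧
      T.val.2.2 = k * (Uu 1 * Ll (τv p ξ i - 2))⁻¹ * k⁻¹ := by
  obtain ⟨h1, h2, h3, hmul, -⟩ := T.prop
  refine reduce (τv p ξ i) hτ _ _ _ (isConj_iff.mp h1) ?_ ?_ hmul
  · rw [trace_isConj h2, trace_Uu]
  · exact h3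

lemma ni_empty (hτ : τv p ξ i - 2 ≠ 0) (s : ZMod p)
    (hL : ¬ IsConj (Uu s) (Ll (τv p ξ i - 2))) :
    IsEmpty (Ni {A | IsConj (Uu 1) A} {A | IsConj (Uu s) A} (TraceClass p ξ i)) := by
  have hT : IsEmpty (NielsenTriple {A | IsConj (Uu 1) A} {A | IsConj (Uu s) A}
      (TraceClass p ξ i)) := by
    constructor
    intro T
    obtain ⟨k, -, h2, -⟩ := reduce_triple p ξ i hτ s T
    apply hL
    have hg2 : IsConj (Uu s) T.val.2.1 := T.prop.2.1
    have : IsConj T.val.2.1 (Ll (τv p ξ i - 2)) :=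
      isConj_iff.mpr ⟨k⁻¹, by rw [h2]; group⟩
    exact hg2.trans this
  constructor
  intro q
  obtain ⟨T, rfl⟩ := Quot.exists_rep q
  exact hT.false T

lemma ni_card_one (hτ : τv p ξ i - 2 ≠ 0) (s : ZMod p)
    (hL : IsConj (Uu s) (Ll (τv p ξ i - 2))) :
    Nat.card (Ni {A | IsConj (Uu 1) A} {A | IsConj (Uu s) A} (TraceClass p ξ i)) = 1 := by
  set c : ZMod p := τv p ξ i - 2 with hcdef
  have hc0 : c ≠ 0 := hτ
  -- the canonical triple
  have hg3tr : (Uu 1 * Ll c : SL2 (ZMod p))⁻¹ ∈ TraceClass p ξ i := by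
    show Matrix.trace (((Uu 1 * Ll c : SL2 (ZMod p))⁻¹ : SL2 (ZMod p)) :
      Matrix (Fin 2) (Fin 2) (ZMod p)) = _
    rw [trace_inv, Matrix.SpecialLinearGroup.coe_mul, Uu_coe, Ll_coe, Matrix.mul_fin_two,
      Matrix.trace_fin_two]
    show (1 * 1 + 1 * c) + (0 * 0 + 1 * 1) = τv p ξ i
    rw [hcdef]; ring
  have hclos : Subgroup.closure ({Uu 1, Ll c, (Uu 1 * Ll c : SL2 (ZMod p))⁻¹} :
      Set (SL2 (ZMod p))) = ⊤ := by
    rw [eq_top_iff, ← closure_eq_top p c hc0]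
    apply Subgroup.closure_mono
    intro x hx
    simp only [Set.mem_insert_iff, Set.mem_singleton_iff] at hx ⊢
    tauto
  have T0 : NielsenTriple {A | IsConj (Uu 1) A} {A | IsConj (Uu s) A} (TraceClass p ξ i) :=
    ⟨(Uu 1, Ll c, (Uu 1 * Ll c)⁻¹), IsConj.refl _, hL, hg3tr, by group, hclos⟩
  rw [Nat.card_eq_one_iff_unique]
  constructor
  · constructor
    intro q q'
    obtain ⟨T, rfl⟩ := Quot.exists_rep q
    obtain ⟨T', rfl⟩ := Quot.exists_rep q'
    obtain ⟨k, h1, h2, h3⟩ := reduce_triple p ξ i hτ s T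
    obtain ⟨k', h1', h2', h3'⟩ := reduce_triple p ξ i hτ s T'
    apply Quot.sound
    refine ⟨k' * k⁻¹, ?_⟩
    have e1 : T'.val.1 = (k' * k⁻¹) * T.val.1 * (k' * k⁻¹)⁻¹ := by rw [h1', h1]; group
    have e2 : T'.val.2.1 = (k' * k⁻¹) * T.val.2.1 * (k' * k⁻¹)⁻¹ := by rw [h2', h2]; group
    have e3 : T'.val.2.2 = (k' * k⁻¹) * T.val.2.2 * (k' * k⁻¹)⁻¹ := by rw [h3', h3]; group
    calc T'.val = (T'.val.1, T'.val.2.1, T'.val.2.2) := rfl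
      _ = _ := by rw [e1, e2, e3]
  · exact ⟨Quot.mk _ T0⟩

end MainAux

end S13

open S13 in
/-- rigidity of the triples `(pA, pA, C(i))` and `(pA, pB, C(i))`: for each
`0 < i < (p-1)/2`, exactly one of the two Nielsen classes is empty and the other is a
singleton. -/
theorem stmt13 (p : ℕ) (hp : p.Prime) [Fact p.Prime] (hp5 : 5 < p)
    (ξ : (ZMod p)ˣ) (hξ : orderOf ξ = p - 1)
    (ε : ZMod p) (hε : ε ≠ 0) (hεns : ¬ ∃ x : ZMod p, x ^ 2 = ε)
    (UA UB : Matrix.SpecialLinearGroup (Fin 2) (ZMod p))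
    (hUA : (UA : Matrix (Fin 2) (Fin 2) (ZMod p)) = !![1, 1; 0, 1])
    (hUB : (UB : Matrix (Fin 2) (Fin 2) (ZMod p)) = !![1, ε; 0, 1])
    (i : ℕ) (hi0 : 0 < i) (hi : i < (p - 1) / 2) :
    Xor'
      (IsEmpty (Ni {A | IsConj UA A} {A | IsConj UA A} (TraceClass p ξ i)) ∧
        Nat.card (Ni {A | IsConj UA A} {A | IsConj UB A} (TraceClass p ξ i)) = 1)
      (Nat.card (Ni {A | IsConj UA A} {A | IsConj UA A} (TraceClass p ξ i)) = 1 ∧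
        IsEmpty (Ni {A | IsConj UA A} {A | IsConj UB A} (TraceClass p ξ i))) := by
  have hUAe : UA = Uu 1 := Subtype.ext (by rw [hUA]; rfl)
  have hUBe : UB = Uu ε := Subtype.ext (by rw [hUB]; rfl)
  subst hUAe hUBe
  set c : ZMod p := τv p ξ i - 2 with hcdef
  -- c ≠ 0
  have hτ : τv p ξ i - 2 ≠ 0 := by
    intro h0
    set x : ZMod p := ((ξ ^ i : (ZMod p)ˣ) : ZMod p) with hxdef
    have hx0 : x ≠ 0 := Units.ne_zero _
    have hxinv : (((ξ ^ i)⁻¹ : (ZMod p)ˣ) : ZMod p) = x⁻¹ := by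
      rw [hxdef]; exact (Units.val_inv_eq_inv_val _)
    have htv : x + x⁻¹ - 2 = 0 := by
      rw [hxdef] at *
      rw [← hxinv]
      exact h0
    have hquad : (x - 1) ^ 2 = 0 := by
      have hxx : x * x⁻¹ = 1 := mul_inv_cancel₀ hx0
      have := congrArg (· * x) htv
      simp only [sub_mul, add_mul, zero_mul] at this
      have h2 : x * x + x⁻¹ * x - 2 * x = 0 := by linear_combination this
      rw [inv_mul_cancel₀ hx0] at h2
      linear_combination h2
    have hx1 : x = 1 := by
      have := pow_eq_zero_iff (n := 2) (by norm_num) |>.mp hquad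
      linear_combination this
    have hunit : ξ ^ i = 1 := Units.ext (by rw [← hxdef] at *; simpa using hx1)
    have hdvd : p - 1 ∣ i := hξ ▸ orderOf_dvd_of_pow_eq_one hunit
    have : p - 1 ≤ i := Nat.le_of_dvd hi0 hdvd
    have : (p - 1) / 2 ≤ p - 1 := Nat.div_le_self _ _
    omega
  have hc0 : c ≠ 0 := hτ
  have hnc0 : -c ≠ 0 := neg_ne_zero.mpr hc0
  obtain ⟨hor, hnand⟩ := sq_cases p ε (-c) hε hεns hnc0
  rcases hor with ⟨γ, hγ⟩ | ⟨γ, hγ⟩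
  · -- -c is a square : pA-case nonempty, pB-case empty
    have hγ0 : γ ≠ 0 := by rintro rfl; simp at hγ; exact hc0 hγ
    have hLA : IsConj (Uu (1 : ZMod p)) (Ll c) := by
      have := isConj_Uu_Ll (1 : ZMod p) γ hγ0
      have hval : (-1 : ZMod p) * γ ^ 2 = c := by linear_combination hγ
      rwa [hval] at this
    have hLB : ¬ IsConj (Uu ε) (Ll c) := by
      intro h
      obtain ⟨δ, hδ0, hδ⟩ := exists_of_isConj_Uu_Ll hε h
      exact hnand ⟨⟨γ, hγ⟩, ⟨δ, by linear_combination -hδ⟩⟩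
    right
    refine ⟨⟨ni_card_one p ξ i hτ 1 hLA, ni_empty p ξ i hτ ε hLB⟩, ?_⟩
    rintro ⟨hemp, hcard⟩
    have h0 : Nat.card (Ni {A | IsConj (Uu (1 : ZMod p)) A} {A | IsConj (Uu (1 : ZMod p)) A}
        (TraceClass p ξ i)) = 0 := @Nat.card_of_isEmpty _ hemp
    have h1 := ni_card_one p ξ i hτ 1 hLA
    omega
  · -- -c = ε·square : pA-case empty, pB-case nonempty
    have hγ0 : γ ≠ 0 := by rintro rfl; simp at hγ; exact hc0 hγ
    have hLB : IsConj (Uu ε) (Ll c) := by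
      have := isConj_Uu_Ll ε γ hγ0
      have hval : -ε * γ ^ 2 = c := by linear_combination hγ
      rwa [hval] at this
    have hLA : ¬ IsConj (Uu (1 : ZMod p)) (Ll c) := by
      intro h
      obtain ⟨δ, hδ0, hδ⟩ := exists_of_isConj_Uu_Ll (one_ne_zero) h
      exact hnand ⟨⟨δ, by linear_combination -hδ⟩, ⟨γ, hγ⟩⟩
    left
    refine ⟨⟨ni_empty p ξ i hτ 1 hLA, ni_card_one p ξ i hτ ε hLB⟩, ?_⟩
    rintro ⟨hcard, hemp⟩
    have h0 : Nat.card (Ni {A | IsConj (Uu (1 : ZMod p)) A} {A | IsConj (Uu ε) A}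
        (TraceClass p ξ i)) = 0 := @Nat.card_of_isEmpty _ hemp
    have h1 := ni_card_one p ξ i hτ ε hLB
    omega
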